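/- Let (U₁, V₁, A₁, φ₁) and (U₂, V₂, A₂, φ₂) be labeled bipartite digraphs. Form their polynomial sum: the digraph with parts U₁ ⊕ U₂ and V = {n ∈ ℕ : n ∈ Im(φ₁) ∪ Im(φ₂)} (a finite type), where there is an arc from n to inl u₁ iff there exists v₁ with φ₁ v₁ = n and an arc from v₁ to u₁ in A₁, an arc from inl u₁ to n iff there exists v₁ with φ₁ v₁ = n and an arc from u₁ to v₁ in A₁, and similarly for inr u₂ using φ₂ and A₂; label V by the (injective) inclusion map V ↪ ℕ. Then the digraph polynomial of this sum digraph equals p(A₁, φ₁) + p(A₂, φ₂). -/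

import Mathlib

/-- `dMinus Ain φ u = ∑_{v : Ain v u} 2 ^ (φ v)`. -/
noncomputable def dMinus {U V : Type*} [Fintype V]
    (Ain : V → U → Prop) (φ : V → ℕ) (u : U) : ℕ :=
  letI := Classical.dec
  ∑ v ∈ Finset.univ.filter (fun v => Ain v u), 2 ^ φ v

/-- `dPlus Aout φ u = ∑_{v : Aout u v} 2 ^ (φ v)`. -/
noncomputable def dPlus {U V : Type*} [Fintype V]
    (Aout : U → V → Prop) (φ : V → ℕ) (u : U) : ℕ :=
  letI := Classical.dec
  ∑ v ∈ Finset.univ.filter (fun v => Aout u v), 2 ^ φ v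

/-- The digraph polynomial `p(A, φ) = ∑_{u : U} X ^ (d₋ u) * Y ^ (d₊ u)` in `ℕ[X, Y]`,
realized as `MvPolynomial (Fin 2) ℕ` with `X = X 0` and `Y = X 1`. -/
noncomputable def digraphPoly {U V : Type*} [Fintype U] [Fintype V]
    (Ain : V → U → Prop) (Aout : U → V → Prop) (φ : V → ℕ) : MvPolynomial (Fin 2) ℕ :=
  ∑ u : U, MvPolynomial.X 0 ^ dMinus Ain φ u * MvPolynomial.X 1 ^ dPlus Aout φ u

open Classical in
lemma sum_key {V : Type*} [Fintype V] {S : Finset ℕ} (φ : V → ℕ) (hφ : Function.Injective φ)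
    (hS : ∀ v, φ v ∈ S) (P : V → Prop) :
    ∑ n ∈ Finset.univ.filter (fun n : ↥S => ∃ v, φ v = (n : ℕ) ∧ P v), 2 ^ (n : ℕ)
    = ∑ v ∈ Finset.univ.filter P, 2 ^ φ v := by
  refine (Finset.sum_bij (fun v _ => (⟨φ v, hS v⟩ : ↥S)) ?_ ?_ ?_ ?_).symm
  · intro v hv
    simp only [Finset.mem_filter, Finset.mem_univ, true_and] at hv ⊢
    exact ⟨v, rfl, hv⟩
  · intro a ha b hb h
    exact hφ (by simpa using congrArg Subtype.val h)
  · intro n hn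
    simp only [Finset.mem_filter, Finset.mem_univ, true_and] at hn
    obtain ⟨v, hv, hP⟩ := hn
    exact ⟨v, by simpa using hP, Subtype.ext hv⟩
  · intro v _; rfl

theorem digraphPoly_polynomialSum {U₁ V₁ U₂ V₂ : Type*}
    [Fintype U₁] [Fintype V₁] [Fintype U₂] [Fintype V₂]
    (Ain₁ : V₁ → U₁ → Prop) (Aout₁ : U₁ → V₁ → Prop)
    (Ain₂ : V₂ → U₂ → Prop) (Aout₂ : U₂ → V₂ → Prop)
    (φ₁ : V₁ → ℕ) (φ₂ : V₂ → ℕ)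
    (hφ₁ : Function.Injective φ₁) (hφ₂ : Function.Injective φ₂) :
    digraphPoly
      (V := ↥(Finset.image φ₁ Finset.univ ∪ Finset.image φ₂ Finset.univ))
      (fun n (u : U₁ ⊕ U₂) =>
        Sum.elim (fun u₁ => ∃ v₁ : V₁, φ₁ v₁ = (n : ℕ) ∧ Ain₁ v₁ u₁)
                 (fun u₂ => ∃ v₂ : V₂, φ₂ v₂ = (n : ℕ) ∧ Ain₂ v₂ u₂) u)
      (fun (u : U₁ ⊕ U₂) n =>
        Sum.elim (fun u₁ => ∃ v₁ : V₁, φ₁ v₁ = (n : ℕ) ∧ Aout₁ u₁ v₁)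
                 (fun u₂ => ∃ v₂ : V₂, φ₂ v₂ = (n : ℕ) ∧ Aout₂ u₂ v₂) u)
      (fun n => (n : ℕ))
    = digraphPoly Ain₁ Aout₁ φ₁ + digraphPoly Ain₂ Aout₂ φ₂ := by
  classical
  have h₁ : ∀ v : V₁, φ₁ v ∈ Finset.image φ₁ Finset.univ ∪ Finset.image φ₂ Finset.univ := by
    intro v; exact Finset.mem_union_left _ (Finset.mem_image_of_mem _ (Finset.mem_univ v))
  have h₂ : ∀ v : V₂, φ₂ v ∈ Finset.image φ₁ Finset.univ ∪ Finset.image φ₂ Finset.univ := by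
    intro v; exact Finset.mem_union_right _ (Finset.mem_image_of_mem _ (Finset.mem_univ v))
  unfold digraphPoly
  rw [Fintype.sum_sum_type]
  refine congrArg₂ (· + ·) ?_ ?_
  · apply Finset.sum_congr rfl
    intro u _
    congr 1
    · congr 1
      unfold dMinus
      simp only [Sum.elim_inl]
      rw [Finset.filter_congr_decidable]
      rw [Finset.filter_congr_decidable]
      convert sum_key φ₁ hφ₁ h₁ (fun v => Ain₁ v u)
      congr 1
    · congr 1
      unfold dPlus
      simp only [Sum.elim_inl]
      rw [Finset.filter_congr_decidable]
      convert sum_key φ₁ hφ₁ h₁ (fun v => Aout₁ u v)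
      congr 1
  · apply Finset.sum_congr rfl
    intro u _
    congr 1
    · congr 1
      unfold dMinus
      simp only [Sum.elim_inr]
      rw [Finset.filter_congr_decidable]
      convert sum_key φ₂ hφ₂ h₂ (fun v => Ain₂ v u)
      congr 1
    · congr 1
      unfold dPlus
      simp only [Sum.elim_inr]
      rw [Finset.filter_congr_decidable]
      convert sum_key φ₂ hφ₂ h₂ (fun v => Aout₂ u v)
      congr 1
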